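/- Let f: {0, 1, …, n−1} → ℝ satisfy f(0) = 0, f(k) > 0 for k > 0, f non-decreasing, and f(j + k) ≤ f(j) + f(k) whenever j + k ≤ n − 1. Then there exists a concave, non-decreasing function g on {0, …, n−1} with g(0) = 0 such that f(k) ≤ g(k) ≤ 2f(k) for all k = 0, 1, …, n−1. -/

import Mathlib

/-- Every function satisfying (S1)–(S3) on `{0,…,n−1}` is approximated within a factor 2
by a concave non-decreasing function. -/
theorem stmt_6 (n : ℕ) (hn : 0 < n) (f : ℕ → ℝ)
    (hS1a : f 0 = 0) (hS1b : ∀ k, 0 < k → k < n → 0 < f k)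
    (hS2 : ∀ j k, j ≤ k → k < n → f j ≤ f k)
    (hS3 : ∀ j k, j + k ≤ n - 1 → f (j + k) ≤ f j + f k) :
    ∃ g : ℕ → ℝ,
      (∀ a k b : ℕ, a ≤ k → k ≤ b → b ≤ n - 1 →
        ((b : ℝ) - a) * g k ≥ ((b : ℝ) - k) * g a + ((k : ℝ) - a) * g b) ∧
      (∀ j k, j ≤ k → k ≤ n - 1 → g j ≤ g k) ∧
      g 0 = 0 ∧
      (∀ k, k ≤ n - 1 → f k ≤ g k ∧ g k ≤ 2 * f k) := by
  set N := n - 1 with hNdef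
  have hltn : ∀ {k : ℕ}, k ≤ N → k < n := by intro k hk; omega
  have hf0 : ∀ j, j ≤ N → 0 ≤ f j := by
    intro j hj
    have := hS2 0 j (Nat.zero_le _) (hltn hj)
    linarith [this, hS1a.ge]
  -- key division lemma: f j ≤ (j/k + 1) * f k
  have key : ∀ k, 0 < k → k ≤ N → ∀ j, j ≤ N → f j ≤ ((j / k : ℕ) + 1 : ℝ) * f k := by
    intro k hk hkN j
    induction j using Nat.strong_induction_on with
    | _ j ih =>
      intro hjN
      by_cases hjk : j ≤ k
      · have h1 : f j ≤ f k := hS2 j k hjk (hltn hkN)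
        have h2 : (0:ℝ) ≤ (j / k : ℕ) := Nat.cast_nonneg _
        nlinarith [hf0 k hkN]
      · push_neg at hjk
        have hsub : j - k < j := by omega
        have h1 : f j ≤ f (j - k) + f k := by
          have := hS3 (j - k) k (by omega)
          rwa [Nat.sub_add_cancel hjk.le] at this
        have h2 := ih (j - k) hsub (by omega)
        have hdiv : j / k = (j - k) / k + 1 := by
          rw [Nat.div_eq_sub_div hk hjk.le]
        rw [hdiv]
        push_cast
        linarith
  -- the set of values of affine majorants at k
    -- majorant predicate
  set P : ℝ → ℝ → Prop := fun c m => 0 ≤ m ∧ ∀ j, j ≤ N → f j ≤ c + m * j with hP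
  set S : ℕ → Set ℝ := fun k => {y | ∃ c m, P c m ∧ y = c + m * k} with hS
  -- a global linear majorant
  obtain ⟨M, hM0, hMmaj⟩ : ∃ M : ℝ, 0 ≤ M ∧ ∀ j, j ≤ N → f j ≤ M * j := by
    refine ⟨∑ j ∈ Finset.range (N + 1), f j, ?_, ?_⟩
    · exact Finset.sum_nonneg fun j hj => hf0 j (by simpa [Nat.lt_succ_iff] using hj)
    · intro j hj
      rcases Nat.eq_zero_or_pos j with h | h
      · simp [h, hS1a]
      · have h1 : f j ≤ ∑ i ∈ Finset.range (N + 1), f i := by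
          refine Finset.single_le_sum (fun i hi => hf0 i (by simpa [Nat.lt_succ_iff] using hi)) ?_
          simpa [Nat.lt_succ_iff] using hj
        have h2 : (1:ℝ) ≤ j := by exact_mod_cast h
        nlinarith [Finset.sum_nonneg fun i (hi : i ∈ Finset.range (N+1)) => hf0 i (by simpa [Nat.lt_succ_iff] using hi)]
  have hPM : P 0 M := ⟨hM0, fun j hj => by simpa using hMmaj j hj⟩
  have hne : ∀ k, (S k).Nonempty := fun k => ⟨0 + M * k, 0, M, hPM, rfl⟩
  have hlb : ∀ k, k ≤ N → f k ∈ lowerBounds (S k) := by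
    rintro k hk y ⟨c, m, ⟨hm, hmaj⟩, rfl⟩
    exact hmaj k hk
  have hbdd : ∀ k, k ≤ N → BddBelow (S k) := fun k hk => ⟨f k, hlb k hk⟩
  have hle : ∀ k, k ≤ N → ∀ c m, P c m → sInf (S k) ≤ c + m * k := by
    intro k hk c m hcm
    exact csInf_le (hbdd k hk) ⟨c, m, hcm, rfl⟩
  have hge : ∀ k, k ≤ N → f k ≤ sInf (S k) := fun k hk => le_csInf (hne k) (hlb k hk)
  refine ⟨fun k => sInf (S k), ?_, ?_, ?_, ?_⟩
  · -- concavity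
    intro a k b hak hkb hbN
    have haN : a ≤ N := le_trans (le_trans hak hkb) hbN
    have hkN : k ≤ N := le_trans hkb hbN
    rcases eq_or_lt_of_le (le_trans hak hkb) with heq | hab
    · -- a = b, so a = k = b
      have h1 : a = k := le_antisymm hak (by omega)
      have h2 : k = b := by omega
      subst h1; subst h2
      simp
    · have hba : (0:ℝ) < (b:ℝ) - a := by
        have : a < b := hab
        have := Nat.cast_lt (α := ℝ) |>.mpr this
        linarith
      have hmain : ∀ y ∈ S k,
          ((b:ℝ) - k) * sInf (S a) + ((k:ℝ) - a) * sInf (S b) ≤ ((b:ℝ) - a) * y := by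
        rintro y ⟨c, m, hcm, rfl⟩
        have h1 : sInf (S a) ≤ c + m * a := hle a haN c m hcm
        have h2 : sInf (S b) ≤ c + m * b := hle b hbN c m hcm
        have hbk : (0:ℝ) ≤ (b:ℝ) - k := by
          have := Nat.cast_le (α := ℝ) |>.mpr hkb; linarith
        have hka : (0:ℝ) ≤ (k:ℝ) - a := by
          have := Nat.cast_le (α := ℝ) |>.mpr hak; linarith
        nlinarith
      have : (((b:ℝ) - k) * sInf (S a) + ((k:ℝ) - a) * sInf (S b)) / ((b:ℝ) - a)
          ≤ sInf (S k) := by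
        refine le_csInf (hne k) fun y hy => ?_
        rw [div_le_iff₀ hba]
        calc ((b:ℝ) - k) * sInf (S a) + ((k:ℝ) - a) * sInf (S b)
            ≤ ((b:ℝ) - a) * y := hmain y hy
          _ = y * ((b:ℝ) - a) := by ring
      rw [ge_iff_le, ← div_le_iff₀' hba] at *
      linarith [this]
  · -- monotone
    intro j k hjk hkN
    refine le_csInf (hne k) ?_
    rintro y ⟨c, m, ⟨hm, hmaj⟩, rfl⟩
    have h1 : sInf (S j) ≤ c + m * j := hle j (le_trans hjk hkN) c m ⟨hm, hmaj⟩
    have h2 : (j:ℝ) ≤ k := Nat.cast_le.mpr hjk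
    nlinarith
  · -- g 0 = 0
    refine le_antisymm ?_ ?_
    · have := hle 0 (Nat.zero_le _) 0 M hPM
      simpa using this
    · have := hge 0 (Nat.zero_le _)
      simpa [hS1a] using this
  · -- sandwich
    intro k hkN
    refine ⟨hge k hkN, ?_⟩
    rcases Nat.eq_zero_or_pos k with h | hk
    · subst h
      have := hle 0 (Nat.zero_le _) 0 M hPM
      simp only [Nat.cast_zero, mul_zero, add_zero, zero_add] at this ⊢
      rw [hS1a]; linarith
    · have hkpos : (0:ℝ) < k := by exact_mod_cast hk
      have hfk : 0 < f k := hS1b k hk (hltn hkN)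
      have hmaj : P (f k) (f k / k) := by
        refine ⟨le_of_lt (div_pos hfk hkpos), fun j hj => ?_⟩
        have h1 := key k hk hkN j hj
        have h2 : ((j / k : ℕ) : ℝ) ≤ (j:ℝ) / k := Nat.cast_div_le
        have h3 : ((j / k : ℕ) : ℝ) * f k ≤ (j:ℝ) / k * f k :=
          mul_le_mul_of_nonneg_right h2 hfk.le
        have : f j ≤ ((j:ℝ) / k + 1) * f k := by nlinarith
        have heq : ((j:ℝ) / k + 1) * f k = f k + f k / k * j := by
          field_simp; ring
        linarith [heq ▸ this]
      have := hle k hkN (f k) (f k / k) hmaj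
      have heq : f k + f k / k * k = 2 * f k := by field_simp; ring
      linarith [heq ▸ this]
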